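/- The 2×2 bordered-determinant rule: det(M)·det(D) = det(A')·det(D') − det(B')·det(C'), where A', B', C', D' are the four (n-1)×(n-1) matrices obtained by bordering D with the appropriate combinations of the vectors b, c, f, h and the scalars a, e, g, l. -/

import Mathlib

open Matrix

variable {n : ℕ}

/-- middle embedding -/
def mid (n : ℕ) (i : Fin n) : Fin (n + 2) := i.succ.castSucc

lemma mid_inj : Function.Injective (mid n) := by
  intro x y h
  simpa [mid, Fin.ext_iff] using h

/-- The corner-vs-middle equivalence. -/
def cornerEquiv (n : ℕ) : Fin 2 ⊕ Fin n ≃ Fin (n + 2) where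
  toFun := Sum.elim ![0, Fin.last (n+1)] (mid n)
  invFun j := if h : (j : ℕ) = 0 then Sum.inl 0
    else if h' : (j : ℕ) = n + 1 then Sum.inl 1
    else Sum.inr ⟨(j : ℕ) - 1, by have := j.isLt; revert h h'; omega⟩
  left_inv x := by
    rcases x with x | x
    · fin_cases x <;> simp [mid, Fin.last]
    · have h1 : ((mid n x : Fin (n+2)) : ℕ) = x + 1 := by simp [mid]
      simp only [Sum.elim_inr, h1]
      rw [dif_neg (by omega), dif_neg (by omega)]
      simp
  right_inv j := by
    by_cases h : (j : ℕ) = 0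
    · simp only [dif_pos h, Sum.elim_inl]
      simp [Fin.ext_iff, h.symm]
      omega
    · by_cases h' : (j : ℕ) = n + 1
      · simp only [dif_neg h, dif_pos h', Sum.elim_inl]
        simp [Fin.ext_iff, Fin.last, h'.symm]
      · simp only [dif_neg h, dif_neg h', Sum.elim_inr]
        simp [mid, Fin.ext_iff]
        omega

theorem desnanot_field {F : Type*} [Field F] (M : Matrix (Fin (n+2)) (Fin (n+2)) F)
    (hM : M.det ≠ 0) :
    M.det * (M.submatrix (mid n) (mid n)).det =
      (M.submatrix Fin.castSucc Fin.castSucc).det * (M.submatrix Fin.succ Fin.succ).det -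
        (M.submatrix Fin.castSucc Fin.succ).det * (M.submatrix Fin.succ Fin.castSucc).det := by
  classical
  set L : Fin (n+2) := Fin.last (n+1) with hL
  -- the auxiliary matrix B
  set B : Matrix (Fin (n+2)) (Fin (n+2)) F := Matrix.of (fun i j =>
    if j = 0 then adjugate M i 0 else if j = L then adjugate M i L else (1 : Matrix (Fin (n+2)) (Fin (n+2)) F) i j) with hB
  have h0L : (0 : Fin (n+2)) ≠ L := by simp [hL, Fin.ext_iff, Fin.last]
  have hmid0 : ∀ x : Fin n, mid n x ≠ 0 := by
    intro x; simp [mid, Fin.ext_iff]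
  have hmidL : ∀ x : Fin n, mid n x ≠ L := by
    intro x; simp [mid, hL, Fin.ext_iff, Fin.last]; omega
  have hBmid : ∀ (i : Fin (n+2)) (y : Fin n),
      B i (mid n y) = (1 : Matrix (Fin (n+2)) (Fin (n+2)) F) i (mid n y) := by
    intro i y
    rw [hB]
    simp only [of_apply]
    rw [if_neg (hmid0 y), if_neg (hmidL y)]
  -- B in block form
  have hBblock : B.submatrix (cornerEquiv n) (cornerEquiv n) =
      fromBlocks !![adjugate M 0 0, adjugate M 0 L; adjugate M L 0, adjugate M L L] 0
        (Matrix.of fun (i : Fin n) (j : Fin 2) =>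
          adjugate M (mid n i) (![0, L] j)) 1 := by
    ext x y
    rcases x with x | x <;> rcases y with y | y
    · fin_cases x <;> fin_cases y <;>
        simp [cornerEquiv, hB, fromBlocks, h0L, h0L.symm, ← hL]
    · fin_cases x <;>
        simp [cornerEquiv, hBmid, fromBlocks, ← hL, Matrix.one_apply_ne (hmid0 y).symm,
          Matrix.one_apply_ne (hmidL y).symm]
    · fin_cases y <;>
        simp [cornerEquiv, hB, fromBlocks, hmid0, hmidL, ← hL, h0L.symm]
    · simp [cornerEquiv, hBmid, fromBlocks, Matrix.one_apply, mid_inj.eq_iff]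
  -- columns of M * B
  have hc : ∀ (i j : Fin (n+2)), (j = 0 ∨ j = L) →
      (M * B) i j = M.det * (1 : Matrix (Fin (n+2)) (Fin (n+2)) F) i j := by
    intro i j hj
    have hcol : ∀ x, B x j = adjugate M x j := by
      intro x
      rw [hB]
      rcases hj with rfl | rfl
      · simp
      · simp [h0L.symm]
    have : (M * B) i j = (M * adjugate M) i j := by
      simp only [Matrix.mul_apply, hcol]
    rw [this, Matrix.mul_adjugate]
    simp
  have hcm : ∀ (i : Fin (n+2)) (y : Fin n), (M * B) i (mid n y) = M i (mid n y) := by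
    intro i y
    have : (M * B) i (mid n y) = (M * (1 : Matrix (Fin (n+2)) (Fin (n+2)) F)) i (mid n y) := by
      simp only [Matrix.mul_apply, hBmid]
    rw [this, Matrix.mul_one]
  have hMBblock : (M * B).submatrix (cornerEquiv n) (cornerEquiv n) =
      fromBlocks (M.det • (1 : Matrix (Fin 2) (Fin 2) F))
        (Matrix.of fun (i : Fin 2) (y : Fin n) => M (![0, L] i) (mid n y)) 0
        (M.submatrix (mid n) (mid n)) := by
    ext x y
    rcases x with x | x <;> rcases y with y | y
    · fin_cases x <;> fin_cases y <;>
        simp [cornerEquiv, fromBlocks, hc _ _ (Or.inl rfl), hc _ _ (Or.inr rfl),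
          Matrix.one_apply, h0L, h0L.symm, ← hL]
    · fin_cases x <;> simp [cornerEquiv, fromBlocks, hcm, ← hL]
    · fin_cases y <;>
        simp [cornerEquiv, fromBlocks, hc _ _ (Or.inl rfl), hc _ _ (Or.inr rfl),
          Matrix.one_apply, hmid0, hmidL, ← hL]
    · simp [cornerEquiv, fromBlocks, hcm]
  -- determinants
  have hdetB : B.det = adjugate M 0 0 * adjugate M L L - adjugate M 0 L * adjugate M L 0 := by
    rw [← det_submatrix_equiv_self (cornerEquiv n), hBblock, det_fromBlocks_zero₁₂, det_one,
      mul_one, det_fin_two_of]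
  have hdetMB : (M * B).det = M.det ^ 2 * (M.submatrix (mid n) (mid n)).det := by
    rw [← det_submatrix_equiv_self (cornerEquiv n), hMBblock, det_fromBlocks_zero₂₁, det_smul,
      det_one, mul_one, Fintype.card_fin]
  -- adjugate corner entries
  have hpow : ((-1 : F) ^ (n + 1)) * ((-1 : F) ^ (n + 1)) = 1 := by
    rw [← pow_add]
    exact Even.neg_one_pow ⟨n + 1, by ring⟩
  have ha00 : adjugate M 0 0 = (M.submatrix Fin.succ Fin.succ).det := by
    rw [adjugate_fin_succ_eq_det_submatrix]
    simp [Fin.succAbove_zero]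
  have haLL : adjugate M L L = (M.submatrix Fin.castSucc Fin.castSucc).det := by
    rw [adjugate_fin_succ_eq_det_submatrix]
    simp only [hL, Fin.succAbove_last, Fin.val_last]
    rw [show ((-1 : F) ^ (n + 1 + (n + 1))) = 1 from by rw [pow_add]; exact hpow, one_mul]
  have ha0L : adjugate M 0 L = (-1) ^ (n + 1) * (M.submatrix Fin.castSucc Fin.succ).det := by
    rw [adjugate_fin_succ_eq_det_submatrix]
    simp [hL, Fin.succAbove_last, Fin.succAbove_zero]
  have haL0 : adjugate M L 0 = (-1) ^ (n + 1) * (M.submatrix Fin.succ Fin.castSucc).det := by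
    rw [adjugate_fin_succ_eq_det_submatrix]
    simp [hL, Fin.succAbove_last, Fin.succAbove_zero]
  -- conclude
  have key : M.det * B.det = M.det ^ 2 * (M.submatrix (mid n) (mid n)).det := by
    rw [← det_mul, hdetMB]
  apply mul_left_cancel₀ hM
  rw [show M.det * (M.det * (M.submatrix (mid n) (mid n)).det) =
      M.det ^ 2 * (M.submatrix (mid n) (mid n)).det from by ring, ← key, hdetB, ha00, haLL,
    ha0L, haL0, mul_mul_mul_comm, hpow, one_mul]
  ring

theorem desnanot {R : Type*} [CommRing R] (M : Matrix (Fin (n+2)) (Fin (n+2)) R) :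
    M.det * (M.submatrix (mid n) (mid n)).det =
      (M.submatrix Fin.castSucc Fin.castSucc).det * (M.submatrix Fin.succ Fin.succ).det -
        (M.submatrix Fin.castSucc Fin.succ).det * (M.submatrix Fin.succ Fin.castSucc).det := by
  classical
  set σ := MvPolynomial (Fin (n+2) × Fin (n+2)) ℤ with hσ
  set X : Matrix (Fin (n+2)) (Fin (n+2)) σ := Matrix.of fun i j => MvPolynomial.X (i, j) with hX
  set F := FractionRing σ with hF
  set φ : σ →+* F := algebraMap σ F with hφ
  have hφinj : Function.Injective φ := IsFractionRing.injective σ F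
  -- the generic determinant is nonzero
  have hdX : X.det ≠ 0 := by
    intro h
    have hev : (MvPolynomial.eval (fun p : (Fin (n+2)) × (Fin (n+2)) =>
        if p.1 = p.2 then (1 : ℤ) else 0) : σ →+* ℤ) X.det = 1 := by
      rw [RingHom.map_det]
      have : (MvPolynomial.eval (fun p : (Fin (n+2)) × (Fin (n+2)) =>
          if p.1 = p.2 then (1 : ℤ) else 0) : σ →+* ℤ).mapMatrix X = 1 := by
        ext i j
        simp [hX, Matrix.one_apply]
      rw [this, det_one]
    rw [h, map_zero] at hev
    exact one_ne_zero hev.symm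
  have hdX' : (φ.mapMatrix X).det ≠ 0 := by
    rw [← RingHom.map_det]
    exact fun h => hdX (hφinj (by rwa [map_zero]))
  -- the identity over σ
  have hσid : X.det * (X.submatrix (mid n) (mid n)).det =
      (X.submatrix Fin.castSucc Fin.castSucc).det * (X.submatrix Fin.succ Fin.succ).det -
        (X.submatrix Fin.castSucc Fin.succ).det * (X.submatrix Fin.succ Fin.castSucc).det := by
    apply hφinj
    have := desnanot_field (φ.mapMatrix X) hdX'
    simp only [RingHom.mapMatrix_apply] at this ⊢
    simpa only [_root_.map_mul, _root_.map_sub, RingHom.map_det, RingHom.mapMatrix_apply, Matrix.submatrix_map] using this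
  -- specialize to M
  set ψ : σ →+* R := (MvPolynomial.eval₂Hom (Int.castRingHom R) fun p => M p.1 p.2) with hψ
  have hXM : X.map ψ = M := by
    ext i j
    simp only [hX, Matrix.map_apply, Matrix.of_apply, hψ]
    exact MvPolynomial.eval₂Hom_X' _ _ _
  have := congrArg ψ hσid
  simpa only [_root_.map_mul, _root_.map_sub, RingHom.map_det, RingHom.mapMatrix_apply,
    ← Matrix.submatrix_map, hXM] using this

set_option maxHeartbeats 2000000 in
/-- The 2×2 bordered-determinant rule:
`det M · det D = det A' · det D' − det B' · det C'`, where
`M = [[a, bᵀ, e], [c, D, f], [g, hᵀ, l]]`, `A' = [[a, bᵀ],[c, D]]`,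
`B' = [[bᵀ, e],[D, f]]`, `C' = [[c, D],[g, hᵀ]]`, `D' = [[D, f],[hᵀ, l]]`. -/
theorem bordered_det_rule {K : Type*} [Field K] {k : ℕ}
    (a e g l : K) (b c f h : Fin k → K) (D : Matrix (Fin k) (Fin k) K) :
    (Matrix.of (fun i j : Fin (k + 2) =>
      if hi0 : (i : ℕ) = 0 then
        if hj0 : (j : ℕ) = 0 then a
        else if hjl : (j : ℕ) = k + 1 then e
        else b ⟨(j : ℕ) - 1, by have := j.isLt; omega⟩
      else if hil : (i : ℕ) = k + 1 then
        if hj0 : (j : ℕ) = 0 then g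
        else if hjl : (j : ℕ) = k + 1 then l
        else h ⟨(j : ℕ) - 1, by have := j.isLt; omega⟩
      else
        if hj0 : (j : ℕ) = 0 then c ⟨(i : ℕ) - 1, by have := i.isLt; omega⟩
        else if hjl : (j : ℕ) = k + 1 then f ⟨(i : ℕ) - 1, by have := i.isLt; omega⟩
        else D ⟨(i : ℕ) - 1, by have := i.isLt; omega⟩
               ⟨(j : ℕ) - 1, by have := j.isLt; omega⟩)).det * D.det =
    -- A' = [[a, bᵀ],[c, D]]
    (Matrix.of (fun i j : Fin (k + 1) =>
      if hi0 : (i : ℕ) = 0 then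
        if hj0 : (j : ℕ) = 0 then a else b ⟨(j : ℕ) - 1, by have := j.isLt; omega⟩
      else
        if hj0 : (j : ℕ) = 0 then c ⟨(i : ℕ) - 1, by have := i.isLt; omega⟩
        else D ⟨(i : ℕ) - 1, by have := i.isLt; omega⟩
               ⟨(j : ℕ) - 1, by have := j.isLt; omega⟩)).det *
    -- D' = [[D, f],[hᵀ, l]]
    (Matrix.of (fun i j : Fin (k + 1) =>
      if hil : (i : ℕ) = k then
        if hjl : (j : ℕ) = k then l else h ⟨(j : ℕ), by have := j.isLt; omega⟩
      else
        if hjl : (j : ℕ) = k then f ⟨(i : ℕ), by have := i.isLt; omega⟩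
        else D ⟨(i : ℕ), by have := i.isLt; omega⟩
               ⟨(j : ℕ), by have := j.isLt; omega⟩)).det -
    -- B' = [[bᵀ, e],[D, f]]
    (Matrix.of (fun i j : Fin (k + 1) =>
      if hi0 : (i : ℕ) = 0 then
        if hjl : (j : ℕ) = k then e else b ⟨(j : ℕ), by have := j.isLt; omega⟩
      else
        if hjl : (j : ℕ) = k then f ⟨(i : ℕ) - 1, by have := i.isLt; omega⟩
        else D ⟨(i : ℕ) - 1, by have := i.isLt; omega⟩
               ⟨(j : ℕ), by have := j.isLt; omega⟩)).det *
    -- C' = [[c, D],[g, hᵀ]]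
    (Matrix.of (fun i j : Fin (k + 1) =>
      if hil : (i : ℕ) = k then
        if hj0 : (j : ℕ) = 0 then g else h ⟨(j : ℕ) - 1, by have := j.isLt; omega⟩
      else
        if hj0 : (j : ℕ) = 0 then c ⟨(i : ℕ), by have := i.isLt; omega⟩
        else D ⟨(i : ℕ), by have := i.isLt; omega⟩
               ⟨(j : ℕ) - 1, by have := j.isLt; omega⟩)).det := by
  classical
  have main := desnanot (n := k) (R := K) (Matrix.of (fun i j : Fin (k + 2) =>
      if hi0 : (i : ℕ) = 0 then
        if hj0 : (j : ℕ) = 0 then a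
        else if hjl : (j : ℕ) = k + 1 then e
        else b ⟨(j : ℕ) - 1, by have := j.isLt; omega⟩
      else if hil : (i : ℕ) = k + 1 then
        if hj0 : (j : ℕ) = 0 then g
        else if hjl : (j : ℕ) = k + 1 then l
        else h ⟨(j : ℕ) - 1, by have := j.isLt; omega⟩
      else
        if hj0 : (j : ℕ) = 0 then c ⟨(i : ℕ) - 1, by have := i.isLt; omega⟩
        else if hjl : (j : ℕ) = k + 1 then f ⟨(i : ℕ) - 1, by have := i.isLt; omega⟩
        else D ⟨(i : ℕ) - 1, by have := i.isLt; omega⟩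
               ⟨(j : ℕ) - 1, by have := j.isLt; omega⟩))
  set M₀ : Matrix (Fin (k + 2)) (Fin (k + 2)) K := Matrix.of (fun i j : Fin (k + 2) =>
      if hi0 : (i : ℕ) = 0 then
        if hj0 : (j : ℕ) = 0 then a
        else if hjl : (j : ℕ) = k + 1 then e
        else b ⟨(j : ℕ) - 1, by have := j.isLt; omega⟩
      else if hil : (i : ℕ) = k + 1 then
        if hj0 : (j : ℕ) = 0 then g
        else if hjl : (j : ℕ) = k + 1 then l
        else h ⟨(j : ℕ) - 1, by have := j.isLt; omega⟩
      else
        if hj0 : (j : ℕ) = 0 then c ⟨(i : ℕ) - 1, by have := i.isLt; omega⟩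
        else if hjl : (j : ℕ) = k + 1 then f ⟨(i : ℕ) - 1, by have := i.isLt; omega⟩
        else D ⟨(i : ℕ) - 1, by have := i.isLt; omega⟩
               ⟨(j : ℕ) - 1, by have := j.isLt; omega⟩) with hM₀
  have hmidval : ∀ i : Fin k, ((mid k i : Fin (k + 2)) : ℕ) = (i : ℕ) + 1 := fun i => rfl
  have hD : M₀.submatrix (mid k) (mid k) = D := by
    ext i j
    simp only [Matrix.submatrix_apply, Matrix.of_apply, hM₀, hmidval]
    rw [dif_neg (by omega), dif_neg (by have := i.isLt; omega), dif_neg (by omega),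
      dif_neg (by have := j.isLt; omega)]
    congr 1 <;> exact Fin.ext (by simp)
  have hA : M₀.submatrix Fin.castSucc Fin.castSucc =
      Matrix.of (fun i j : Fin (k + 1) =>
      if hi0 : (i : ℕ) = 0 then
        if hj0 : (j : ℕ) = 0 then a else b ⟨(j : ℕ) - 1, by have := j.isLt; omega⟩
      else
        if hj0 : (j : ℕ) = 0 then c ⟨(i : ℕ) - 1, by have := i.isLt; omega⟩
        else D ⟨(i : ℕ) - 1, by have := i.isLt; omega⟩
               ⟨(j : ℕ) - 1, by have := j.isLt; omega⟩) := by
    ext i j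
    simp only [Matrix.submatrix_apply, Matrix.of_apply, hM₀, Fin.coe_castSucc]
    have hi := i.isLt
    have hj := j.isLt
    split_ifs <;> first | rfl | omega
  have hD' : M₀.submatrix Fin.succ Fin.succ =
      Matrix.of (fun i j : Fin (k + 1) =>
      if hil : (i : ℕ) = k then
        if hjl : (j : ℕ) = k then l else h ⟨(j : ℕ), by have := j.isLt; omega⟩
      else
        if hjl : (j : ℕ) = k then f ⟨(i : ℕ), by have := i.isLt; omega⟩
        else D ⟨(i : ℕ), by have := i.isLt; omega⟩
               ⟨(j : ℕ), by have := j.isLt; omega⟩) := by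
    ext i j
    simp only [Matrix.submatrix_apply, Matrix.of_apply, hM₀, Fin.val_succ]
    have hi := i.isLt
    have hj := j.isLt
    split_ifs <;>
      first
        | rfl | omega | contradiction
        | (congr 1 <;> simp only [Fin.mk.injEq] <;> omega)
  have hB' : M₀.submatrix Fin.castSucc Fin.succ =
      Matrix.of (fun i j : Fin (k + 1) =>
      if hi0 : (i : ℕ) = 0 then
        if hjl : (j : ℕ) = k then e else b ⟨(j : ℕ), by have := j.isLt; omega⟩
      else
        if hjl : (j : ℕ) = k then f ⟨(i : ℕ) - 1, by have := i.isLt; omega⟩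
        else D ⟨(i : ℕ) - 1, by have := i.isLt; omega⟩
               ⟨(j : ℕ), by have := j.isLt; omega⟩) := by
    ext i j
    simp only [Matrix.submatrix_apply, Matrix.of_apply, hM₀, Fin.val_succ, Fin.coe_castSucc]
    have hi := i.isLt
    have hj := j.isLt
    split_ifs <;>
      first
        | rfl | omega | contradiction
        | (congr 1 <;> simp only [Fin.mk.injEq] <;> omega)
  have hC' : M₀.submatrix Fin.succ Fin.castSucc =
      Matrix.of (fun i j : Fin (k + 1) =>
      if hil : (i : ℕ) = k then
        if hj0 : (j : ℕ) = 0 then g else h ⟨(j : ℕ) - 1, by have := j.isLt; omega⟩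
      else
        if hj0 : (j : ℕ) = 0 then c ⟨(i : ℕ), by have := i.isLt; omega⟩
        else D ⟨(i : ℕ), by have := i.isLt; omega⟩
               ⟨(j : ℕ) - 1, by have := j.isLt; omega⟩) := by
    ext i j
    simp only [Matrix.submatrix_apply, Matrix.of_apply, hM₀, Fin.val_succ, Fin.coe_castSucc]
    have hi := i.isLt
    have hj := j.isLt
    split_ifs <;>
      first
        | rfl | omega | contradiction
        | (congr 1 <;> simp only [Fin.mk.injEq] <;> omega)
  rw [hD, hA, hD', hB', hC'] at main
  exact main
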